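/- Let M1, M2 be integers with 4 ≤ M1 ≤ M2. Then the average effective resistance of the two-dimensional toroidal grid satisfies R_ave(T_{M1,M2}) ≤ (1/(2π))·log M2 + (1/12)·(M2/M1) + 1, where log denotes the natural logarithm. -/

import Mathlib

open Real Finset

/-- Average effective resistance of the two-dimensional toroidal grid `T_{M1,M2}`. -/
noncomputable def Rave2 (M1 M2 : ℕ) : ℝ :=
  (1 / ((M1 : ℝ) * M2)) * ∑ i ∈ Finset.range M1, ∑ j ∈ Finset.range M2,
    if i = 0 ∧ j = 0 then 0
    else 1 / (4 - 2 * Real.cos (2 * Real.pi * i / M1) - 2 * Real.cos (2 * Real.pi * j / M2))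


section helpers
open Complex

noncomputable def eM (M : ℕ) : ℂ := Complex.exp (2 * Real.pi * Complex.I / M)

lemma eM_pow_M {M : ℕ} (hM : 0 < M) : (eM M) ^ M = 1 := by
  have hM0 : (M : ℂ) ≠ 0 := Nat.cast_ne_zero.mpr hM.ne'
  rw [eM, ← Complex.exp_nat_mul]
  rw [show (M : ℂ) * (2 * Real.pi * Complex.I / M) = 2 * Real.pi * Complex.I by
    field_simp]
  exact Complex.exp_two_pi_mul_I

lemma eM_prim {M : ℕ} (hM : 0 < M) : IsPrimitiveRoot (eM M) M :=
  Complex.isPrimitiveRoot_exp M hM.ne'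

lemma eM_ne_zero (M : ℕ) : eM M ≠ 0 := Complex.exp_ne_zero _

lemma inner_orth {M : ℕ} (hM : 0 < M) {k l : ℕ} (hk : k < M) (hl : l < M) :
    ∑ j ∈ range M, ((eM M) ^ k * ((eM M) ^ l)⁻¹) ^ j = if k = l then (M : ℂ) else 0 := by
  rcases eq_or_ne k l with h | h
  · subst h
    simp [mul_inv_cancel₀ (pow_ne_zero k (eM_ne_zero M))]
  · rw [if_neg h]
    have hl0 : (eM M) ^ l ≠ 0 := pow_ne_zero l (eM_ne_zero M)
    have hz1 : (eM M) ^ k * ((eM M) ^ l)⁻¹ ≠ 1 := by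
      intro hc
      have : (eM M) ^ k = (eM M) ^ l := by
        field_simp at hc
        simpa using hc
      exact h ((eM_prim hM).pow_inj hk hl this)
    have hzM : ((eM M) ^ k * ((eM M) ^ l)⁻¹) ^ M = 1 := by
      rw [mul_pow, ← inv_pow, ← pow_mul, ← pow_mul, mul_comm k M, mul_comm l M, pow_mul,
        pow_mul, eM_pow_M hM, one_pow]
      rw [inv_pow, eM_pow_M hM]
      simp
    rw [geom_sum_eq hz1, hzM]
    simp

lemma parseval {M : ℕ} (hM : 0 < M) (c : ℕ → ℝ) :
    ∑ j ∈ range M, Complex.normSq (∑ k ∈ range M, (c k : ℂ) * (eM M) ^ (j * k)) =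
      M * ∑ k ∈ range M, (c k) ^ 2 := by
  have key : ∀ j k : ℕ, (eM M) ^ (j * k) = ((eM M) ^ k) ^ j := by
    intro j k; rw [← pow_mul, mul_comm]
  have key2 : ∀ j l : ℕ, ((eM M)⁻¹) ^ (j * l) = (((eM M) ^ l)⁻¹) ^ j := by
    intro j l; rw [inv_pow, key, ← inv_pow]
  have conj_eM : (starRingEnd ℂ) (eM M) = (eM M)⁻¹ := by
    rw [eM, ← Complex.exp_conj, ← Complex.exp_neg]
    congr 1
    simp only [map_div₀, map_mul, Complex.conj_I, Complex.conj_ofReal, map_ofNat,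
      Complex.conj_natCast]
    ring
  apply Complex.ofReal_injective
  push_cast
  calc (∑ j ∈ range M, (Complex.normSq (∑ k ∈ range M, (c k : ℂ) * (eM M) ^ (j * k)) : ℂ))
      = ∑ j ∈ range M, (∑ k ∈ range M, (c k : ℂ) * (eM M) ^ (j * k)) *
          (starRingEnd ℂ) (∑ l ∈ range M, (c l : ℂ) * (eM M) ^ (j * l)) := by
        refine Finset.sum_congr rfl fun j _ => ?_
        rw [Complex.mul_conj]
    _ = ∑ j ∈ range M, ∑ k ∈ range M, ∑ l ∈ range M,
          ((c k : ℂ) * (c l : ℂ)) * (((eM M) ^ k * ((eM M) ^ l)⁻¹) ^ j) := by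
        refine Finset.sum_congr rfl fun j _ => ?_
        rw [map_sum, Finset.sum_mul_sum]
        refine Finset.sum_congr rfl fun k _ => Finset.sum_congr rfl fun l _ => ?_
        rw [map_mul, map_pow, conj_eM, Complex.conj_ofReal, key, key2, mul_pow]
        ring
    _ = ∑ k ∈ range M, ∑ l ∈ range M, ((c k : ℂ) * (c l : ℂ)) *
          ∑ j ∈ range M, (((eM M) ^ k * ((eM M) ^ l)⁻¹) ^ j) := by
        rw [Finset.sum_comm]
        refine Finset.sum_congr rfl fun k _ => ?_
        rw [Finset.sum_comm]
        refine Finset.sum_congr rfl fun l _ => ?_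
        rw [Finset.mul_sum]
    _ = ∑ k ∈ range M, ((c k : ℂ) * (c k : ℂ)) * M := by
        refine Finset.sum_congr rfl fun k hk => ?_
        rw [Finset.sum_eq_single k]
        · rw [inner_orth hM (mem_range.mp hk) (mem_range.mp hk), if_pos rfl]
        · intro l hl hlk
          rw [inner_orth hM (mem_range.mp hk) (mem_range.mp hl), if_neg (Ne.symm hlk),
            mul_zero]
        · intro h; exact absurd hk h
    _ = (M : ℂ) * ∑ k ∈ range M, (c k : ℂ) ^ 2 := by
        rw [Finset.mul_sum]
        refine Finset.sum_congr rfl fun k _ => by ring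

lemma geom_weighted (x : ℂ) (M : ℕ) :
    (1 - x) * ∑ k ∈ range M, (k : ℂ) * x ^ k
      = (∑ k ∈ range M, x ^ k) - 1 - ((M : ℂ) - 1) * x ^ M := by
  induction M with
  | zero => simp
  | succ n ih =>
    rw [Finset.sum_range_succ, Finset.sum_range_succ (f := fun k => x ^ k), mul_add, ih]
    push_cast
    ring

lemma eM_pow_eq (M : ℕ) (j : ℕ) : (eM M) ^ j = Complex.exp ((2 * Real.pi * j / M : ℝ) * Complex.I) := by
  rw [eM, ← Complex.exp_nat_mul]
  congr 1
  push_cast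
  ring

lemma normSq_one_sub_eM {M : ℕ} (j : ℕ) :
    Complex.normSq (1 - (eM M) ^ j) = 2 - 2 * Real.cos (2 * Real.pi * j / M) := by
  rw [eM_pow_eq]
  rw [Complex.normSq_apply, Complex.sub_re, Complex.sub_im, Complex.one_re, Complex.one_im,
    Complex.exp_ofReal_mul_I_re, Complex.exp_ofReal_mul_I_im]
  nlinarith [Real.sin_sq_add_cos_sq (2 * Real.pi * j / M)]

lemma sum_id_real (n : ℕ) : ∑ k ∈ range n, (k : ℝ) = n * (n - 1) / 2 := by
  induction n with
  | zero => simp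
  | succ m ih => rw [Finset.sum_range_succ, ih]; push_cast; ring

lemma sum_sq_real (n : ℕ) : ∑ k ∈ range n, (k : ℝ) ^ 2 = n * (n - 1) * (2 * n - 1) / 6 := by
  induction n with
  | zero => simp
  | succ m ih => rw [Finset.sum_range_succ, ih]; push_cast; ring

lemma sumB {M : ℕ} (hM : 2 ≤ M) :
    ∑ j ∈ range M, (if j = 0 then (0 : ℝ) else 1 / (2 - 2 * Real.cos (2 * Real.pi * j / M)))
      = ((M : ℝ) ^ 2 - 1) / 12 := by
  have hM0 : 0 < M := by omega
  set V : ℕ → ℂ := fun j => ∑ k ∈ range M, ((k : ℝ) : ℂ) * (eM M) ^ (j * k) with hV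
  have hMne : (M : ℝ) ≠ 0 := Nat.cast_ne_zero.mpr hM0.ne'
  -- step: for j ≠ 0 in range, (1 - eM^j) * V j = -M
  have step1 : ∀ j ∈ range M, j ≠ 0 → (1 - (eM M) ^ j) * V j = -(M : ℂ) := by
    intro j hj hj0
    have hx1 : (eM M) ^ j ≠ 1 :=
      (eM_prim hM0).pow_ne_one_of_pos_of_lt hj0 (mem_range.mp hj)
    have hxM : ((eM M) ^ j) ^ M = 1 := by
      rw [← pow_mul, mul_comm, pow_mul, eM_pow_M hM0, one_pow]
    have hgeom : ∑ k ∈ range M, ((eM M) ^ j) ^ k = 0 := by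
      rw [geom_sum_eq hx1, hxM]; simp
    have hVj : V j = ∑ k ∈ range M, (k : ℂ) * ((eM M) ^ j) ^ k := by
      rw [hV]
      refine Finset.sum_congr rfl fun k _ => ?_
      rw [← pow_mul]; norm_num
    rw [hVj, geom_weighted, hgeom, hxM]
    ring
  -- per-term identity
  have step2 : ∀ j ∈ range M,
      (if j = 0 then (0 : ℝ) else 1 / (2 - 2 * Real.cos (2 * Real.pi * j / M)))
        = Complex.normSq (V j) / (M : ℝ) ^ 2
          - (if j = 0 then Complex.normSq (V 0) / (M : ℝ) ^ 2 else 0) := by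
    intro j hj
    by_cases hj0 : j = 0
    · subst hj0; simp
    · rw [if_neg hj0, if_neg hj0, sub_zero]
      have h1 := step1 j hj hj0
      have h2 : Complex.normSq (1 - (eM M) ^ j) * Complex.normSq (V j) = (M : ℝ) ^ 2 := by
        rw [← Complex.normSq_mul, h1]
        simp [Complex.normSq_ofReal]
        ring
      have h3 : (2 - 2 * Real.cos (2 * Real.pi * j / M)) * Complex.normSq (V j) = (M : ℝ) ^ 2 := by
        rw [← normSq_one_sub_eM j]; exact h2
      have hpos : 0 < 2 - 2 * Real.cos (2 * Real.pi * j / M) := by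
        rw [← normSq_one_sub_eM j]
        apply Complex.normSq_pos.mpr
        intro hc
        have : (eM M) ^ j = 1 := by
          have := sub_eq_zero.mp hc; linear_combination -this
        exact (eM_prim hM0).pow_ne_one_of_pos_of_lt hj0 (mem_range.mp hj) this
      rw [div_eq_div_iff hpos.ne' (pow_ne_zero 2 hMne)]
      linarith [h3]
  rw [Finset.sum_congr rfl step2, Finset.sum_sub_distrib, Finset.sum_ite_eq' (range M) 0
    (fun _ => Complex.normSq (V 0) / (M : ℝ) ^ 2), if_pos (mem_range.mpr hM0)]
  have hpars : ∑ j ∈ range M, Complex.normSq (V j) = M * ∑ k ∈ range M, ((k : ℝ)) ^ 2 :=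
    parseval hM0 (fun k => (k : ℝ))
  have hV0 : Complex.normSq (V 0) = (∑ k ∈ range M, (k : ℝ)) ^ 2 := by
    have : V 0 = ((∑ k ∈ range M, (k : ℝ) : ℝ) : ℂ) := by
      rw [hV]
      push_cast
      refine Finset.sum_congr rfl fun k _ => ?_
      rw [zero_mul, pow_zero, mul_one]
    rw [this, Complex.normSq_ofReal]
    ring
  rw [← Finset.sum_div, hpars, hV0, sum_id_real, sum_sq_real]
  field_simp
  ring

lemma normSq_w_sub_eM {M : ℕ} (w : ℝ) (j : ℕ) :
    Complex.normSq ((w : ℂ) - (eM M) ^ j) = w ^ 2 - 2 * w * Real.cos (2 * Real.pi * j / M) + 1 := by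
  rw [eM_pow_eq]
  rw [Complex.normSq_apply, Complex.sub_re, Complex.sub_im, Complex.ofReal_re, Complex.ofReal_im,
    Complex.exp_ofReal_mul_I_re, Complex.exp_ofReal_mul_I_im]
  nlinarith [Real.sin_sq_add_cos_sq (2 * Real.pi * j / M)]

lemma rowA {M : ℕ} (hM : 2 ≤ M) {a : ℝ} (ha : 0 < a) :
    ∑ j ∈ range M, 1 / (a + 2 - 2 * Real.cos (2 * Real.pi * j / M))
      ≤ M / (2 * Real.sqrt a) + 1 / a := by
  have hM0 : 0 < M := by omega
  have hMpos : (0:ℝ) < M := by positivity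
  obtain ⟨s, hs⟩ : ∃ s : ℝ, s = Real.sqrt (a * (a + 4)) := ⟨_, rfl⟩
  have hs2 : s ^ 2 = a * (a + 4) := by rw [hs]; exact Real.sq_sqrt (by nlinarith)
  have hsqa : Real.sqrt a > 0 := Real.sqrt_pos.mpr ha
  have hsa : s ≥ 2 * Real.sqrt a := by
    rw [hs, show a * (a + 4) = (2 * Real.sqrt a) ^ 2 + a ^ 2 by
      rw [mul_pow]; rw [Real.sq_sqrt ha.le]; ring]
    calc Real.sqrt ((2 * Real.sqrt a) ^ 2 + a ^ 2) ≥ Real.sqrt ((2 * Real.sqrt a) ^ 2) := by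
          apply Real.sqrt_le_sqrt; nlinarith
      _ = 2 * Real.sqrt a := by rw [Real.sqrt_sq (by positivity)]
  have hspos : 0 < s := lt_of_lt_of_le (by positivity) hsa
  obtain ⟨w, hw⟩ : ∃ w : ℝ, w = (a + 2 + s) / 2 := ⟨_, rfl⟩
  have hw1 : 1 < w := by rw [hw]; nlinarith
  have hwpos : (0 : ℝ) < w := by linarith
  have hquad : w ^ 2 = (a + 2) * w - 1 := by rw [hw]; nlinarith [hs2]
  have hwM1 : 1 < w ^ M := one_lt_pow₀ hw1 (by omega)
  have hwM1' : (0:ℝ) < w ^ M - 1 := by linarith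
  -- denominators
  have hden : ∀ j : ℕ, a + 2 - 2 * Real.cos (2 * Real.pi * j / M)
      = Complex.normSq ((w : ℂ) - (eM M) ^ j) / w := by
    intro j
    rw [normSq_w_sub_eM, hquad]
    have hcos := Real.neg_one_le_cos (2 * Real.pi * j / M)
    field_simp
    ring
  -- V j and its relation
  obtain ⟨V, hV⟩ : ∃ V : ℕ → ℂ,
      V = fun j => ∑ k ∈ range M, ((w ^ (M - 1 - k) : ℝ) : ℂ) * (eM M) ^ (j * k) := ⟨_, rfl⟩
  have hkey : ∀ j : ℕ, ((w : ℂ) - (eM M) ^ j) * V j = ((w ^ M : ℝ) : ℂ) - 1 := by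
    intro j
    have hxM : ((eM M) ^ j) ^ M = 1 := by
      rw [← pow_mul, mul_comm, pow_mul, eM_pow_M hM0, one_pow]
    have hVj : V j = ∑ k ∈ range M, ((w : ℂ)) ^ (M - 1 - k) * ((eM M) ^ j) ^ k := by
      rw [hV]
      refine Finset.sum_congr rfl fun k _ => ?_
      rw [← pow_mul, mul_comm j k, pow_mul]
      norm_num
    have := geom_sum₂_mul (R := ℂ) (w : ℂ) ((eM M) ^ j) M
    -- (∑ i ∈ range M, w ^ i * (e^j) ^ (M - 1 - i)) * (w - e^j) = w ^ M - (e^j) ^ M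
    rw [hxM] at this
    have hre : ∑ i ∈ range M, ((w:ℂ)) ^ i * ((eM M) ^ j) ^ (M - 1 - i)
        = ∑ k ∈ range M, ((w : ℂ)) ^ (M - 1 - k) * ((eM M) ^ j) ^ k := by
      rw [← Finset.sum_range_reflect]
      refine Finset.sum_congr rfl fun k hk => ?_
      have hk' := mem_range.mp hk
      rw [show M - 1 - (M - 1 - k) = k by omega]
      try ring
    rw [hVj, ← hre]
    push_cast
    linear_combination this
  -- normSq V j
  have hterm : ∀ j : ℕ, 1 / (a + 2 - 2 * Real.cos (2 * Real.pi * j / M))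
      = w * Complex.normSq (V j) / (w ^ M - 1) ^ 2 := by
    intro j
    have h1 : Complex.normSq ((w : ℂ) - (eM M) ^ j) * Complex.normSq (V j) = (w ^ M - 1) ^ 2 := by
      rw [← Complex.normSq_mul, hkey]
      rw [show ((w ^ M : ℝ) : ℂ) - 1 = ((w ^ M - 1 : ℝ) : ℂ) by push_cast; ring,
        Complex.normSq_ofReal]
      ring
    have hnpos : 0 < Complex.normSq ((w : ℂ) - (eM M) ^ j) := by
      nlinarith [Complex.normSq_nonneg (V j), Complex.normSq_nonneg ((w : ℂ) - (eM M) ^ j)]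
    rw [hden j, one_div_div,
      div_eq_div_iff hnpos.ne' (by positivity : ((w ^ M - 1) ^ 2 : ℝ) ≠ 0)]
    rw [← h1]
    ring
  -- sum up
  have hsum : ∑ j ∈ range M, 1 / (a + 2 - 2 * Real.cos (2 * Real.pi * j / M))
      = w * (M * ∑ k ∈ range M, (w ^ (M - 1 - k)) ^ 2) / (w ^ M - 1) ^ 2 := by
    rw [Finset.sum_congr rfl (fun j _ => hterm j), ← Finset.sum_div, ← Finset.mul_sum, hV]
    rw [parseval hM0 (fun k => w ^ (M - 1 - k))]
  have hgeo : ∑ k ∈ range M, (w ^ (M - 1 - k)) ^ 2 = ((w ^ M) ^ 2 - 1) / (w ^ 2 - 1) := by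
    have hw2 : w ^ 2 ≠ 1 := by nlinarith
    have : ∑ k ∈ range M, (w ^ (M - 1 - k)) ^ 2 = ∑ k ∈ range M, (w ^ 2) ^ k := by
      rw [← Finset.sum_range_reflect]
      refine Finset.sum_congr rfl fun k hk => ?_
      have hk' := mem_range.mp hk
      rw [show M - 1 - (M - 1 - k) = k by omega, ← pow_mul, ← pow_mul]
      ring_nf
    rw [this, geom_sum_eq hw2, ← pow_mul, mul_comm 2 M, pow_mul]
  have hw2s : w ^ 2 - 1 = w * s := by nlinarith [hs2]
  have hfact : (w ^ M) ^ 2 - 1 = (w ^ M - 1) * (w ^ M + 1) := by ring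
  have hBern : w ^ M - 1 ≥ M * Real.sqrt a := by
    have h := one_add_mul_le_pow (a := w - 1) (by linarith) M
    have hwa : w - 1 ≥ Real.sqrt a := by
      rw [hw]; nlinarith [hsa]
    have h2 : (M : ℝ) * (w - 1) ≥ M * Real.sqrt a :=
      mul_le_mul_of_nonneg_left hwa (by positivity)
    have h3 : (1 : ℝ) + (w - 1) = w := by ring
    rw [h3] at h
    linarith
  -- final: w * (M * ((w^M)^2-1)/(w^2-1)) / (w^M-1)^2 = M(w^M+1)/(s(w^M-1)) ≤ M/(2√a) + 1/a
  have lhs_eq : w * ((M : ℝ) * ((w ^ M - 1) * (w ^ M + 1) / (w * s))) / (w ^ M - 1) ^ 2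
      = M / s + 2 * M / (s * (w ^ M - 1)) := by
    field_simp
    ring
  rw [hsum, hgeo, hfact, hw2s, lhs_eq]
  have h1 : (M : ℝ) / s ≤ M / (2 * Real.sqrt a) := by
    rw [div_le_div_iff₀ hspos (by positivity)]
    exact mul_le_mul_of_nonneg_left hsa hMpos.le
  have h2 : 2 * M / (s * (w ^ M - 1)) ≤ 1 / a := by
    have hden2 : s * (w ^ M - 1) ≥ (2 * Real.sqrt a) * (M * Real.sqrt a) := by
      apply mul_le_mul hsa hBern (by positivity) (by positivity)
    have heq : (2 * Real.sqrt a) * (M * Real.sqrt a) = 2 * M * a := by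
      rw [show (2 * Real.sqrt a) * ((M:ℝ) * Real.sqrt a)
          = 2 * M * (Real.sqrt a * Real.sqrt a) by ring, Real.mul_self_sqrt ha.le]
    rw [heq] at hden2
    rw [div_le_div_iff₀ (mul_pos hspos hwM1') ha]
    linarith [hden2]
  linarith


lemma one_div_sin_le {t : ℝ} (h0 : 0 < t) (h2 : t ≤ Real.pi / 2) :
    1 / Real.sin t ≤ 1 / t + 1 := by
  have hπ := Real.pi_pos
  have hsin : 0 < Real.sin t := Real.sin_pos_of_pos_of_lt_pi h0 (by linarith)
  have key : t ≤ (1 + t) * Real.sin t := by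
    rcases le_or_gt t 1 with h1 | h1
    · have hc : t - t ^ 3 / 4 < Real.sin t := by
        have := Real.sin_gt_sub_cube h0; nlinarith [pow_pos h0 3]
      have h4 : (0:ℝ) ≤ 4 - t - t ^ 2 := by nlinarith
      have hpoly : t ≤ (1 + t) * (t - t ^ 3 / 4) := by
        nlinarith [mul_nonneg (sq_nonneg t) h4]
      have hmul := mul_lt_mul_of_pos_left hc (show (0:ℝ) < 1 + t by linarith)
      linarith
    · have hmem1 : (1:ℝ) ∈ Set.Icc (-(Real.pi/2)) (Real.pi/2) := by
        constructor <;> nlinarith [Real.pi_gt_three]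
      have hmemt : t ∈ Set.Icc (-(Real.pi/2)) (Real.pi/2) := by
        constructor <;> nlinarith
      have hmono : Real.sin 1 < Real.sin t := Real.strictMonoOn_sin hmem1 hmemt h1
      have hs1 : (3:ℝ)/4 < Real.sin 1 := by
        have h := Real.sin_gt_sub_cube (by norm_num : (0:ℝ) < 1)
        nlinarith [h]
      nlinarith [Real.pi_lt_d2]
  have : 1 / t + 1 = (1 + t) / t := by field_simp
  rw [this, div_le_div_iff₀ hsin h0]
  linarith

lemma inv_sin_bound {n i : ℕ} (hn : 2 ≤ n) (hi1 : 1 ≤ i) (hi2 : i < n) :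
    1 / Real.sin (Real.pi * i / n)
      ≤ (n : ℝ) / (Real.pi * i) + (n : ℝ) / (Real.pi * ((n : ℝ) - i)) + 1 := by
  have hπ := Real.pi_pos
  have hn0 : (0:ℝ) < n := by positivity
  have hi0 : (0:ℝ) < i := by exact_mod_cast hi1
  have hni : (0:ℝ) < (n:ℝ) - i := by
    have : (i:ℝ) < n := by exact_mod_cast hi2
    linarith
  rcases le_or_gt (2 * i) n with hc | hc
  · have h2i : (2:ℝ) * i ≤ n := by exact_mod_cast hc
    have ht0 : 0 < Real.pi * i / n := by positivity
    have ht2 : Real.pi * i / n ≤ Real.pi / 2 := by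
      rw [div_le_div_iff₀ hn0 (by norm_num : (0:ℝ) < 2)]
      nlinarith
    have := one_div_sin_le ht0 ht2
    have heq : 1 / (Real.pi * i / n) = (n:ℝ) / (Real.pi * i) := by
      rw [one_div_div]
    rw [heq] at this
    have hpos : 0 ≤ (n : ℝ) / (Real.pi * ((n:ℝ) - i)) := by positivity
    linarith
  · have h2i : (n:ℝ) < 2 * i := by exact_mod_cast hc
    have hsym : Real.sin (Real.pi * i / n) = Real.sin (Real.pi * ((n:ℝ) - i) / n) := by
      rw [show Real.pi * ((n:ℝ) - i) / n = Real.pi - Real.pi * i / n by field_simp,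
        Real.sin_pi_sub]
    have ht0 : 0 < Real.pi * ((n:ℝ) - i) / n := by positivity
    have ht2 : Real.pi * ((n:ℝ) - i) / n ≤ Real.pi / 2 := by
      rw [div_le_div_iff₀ hn0 (by norm_num : (0:ℝ) < 2)]
      nlinarith
    have := one_div_sin_le ht0 ht2
    have heq : 1 / (Real.pi * ((n:ℝ) - i) / n) = (n:ℝ) / (Real.pi * ((n:ℝ) - i)) := by
      rw [one_div_div]
    rw [heq] at this
    have hpos : 0 ≤ (n : ℝ) / (Real.pi * i) := by positivity
    rw [hsym]
    linarith

lemma harm_le (n : ℕ) (hn : 1 ≤ n) :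
    ∑ i ∈ range n, (1:ℝ) / (i + 1) ≤ 1 + Real.log n := by
  induction n with
  | zero => omega
  | succ m ih =>
    rcases Nat.eq_or_lt_of_le hn with h | h
    · simp [← h]
    · have hm1 : 1 ≤ m := by omega
      have hm0 : (0:ℝ) < m := by positivity
      have hstep : Real.log m + 1 / (m + 1) ≤ Real.log (m + 1) := by
        have hx : (0:ℝ) < (m:ℝ) / (m + 1) := by positivity
        have hlog := Real.log_le_sub_one_of_pos hx
        rw [Real.log_div hm0.ne' (by positivity : ((m:ℝ)+1) ≠ 0)] at hlog
        have : (m:ℝ) / (m + 1) - 1 = -(1 / (m + 1)) := by field_simp; ring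
        rw [this] at hlog
        linarith
      rw [Finset.sum_range_succ]
      push_cast
      have := ih hm1
      push_cast at this
      linarith

end helpers

lemma frac_aux {x : ℝ} (hx : 0 ≤ x) (h3 : 3 < Real.pi) : x/(2*Real.pi) ≤ x/6 := by
  rw [div_le_div_iff₀ (by linarith) (by norm_num)]
  nlinarith
theorem torus2_upper (M1 M2 : ℕ) (h1 : 4 ≤ M1) (h12 : M1 ≤ M2) :
    Rave2 M1 M2 ≤ (1 / (2 * Real.pi)) * Real.log M2 + (1 / 12) * ((M2 : ℝ) / M1) + 1 := by
  have hπ := Real.pi_pos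
  have hπ3 := Real.pi_gt_three
  obtain ⟨m, rfl⟩ : ∃ m, M1 = m + 1 := ⟨M1 - 1, by omega⟩
  have hm : 3 ≤ m := by omega
  have hM2 : 2 ≤ M2 := by omega
  have hApos : (0:ℝ) < ((m+1 : ℕ) : ℝ) := by positivity
  have hNpos : (0:ℝ) < (M2 : ℝ) := by positivity
  -- row 0
  have row0 : ∑ j ∈ Finset.range M2,
      (if (0:ℕ) = 0 ∧ j = 0 then (0:ℝ)
        else 1 / (4 - 2 * Real.cos (2 * Real.pi * ((0:ℕ):ℝ) / ((m+1 : ℕ):ℝ))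
          - 2 * Real.cos (2 * Real.pi * j / M2)))
      = ((M2:ℝ)^2 - 1) / 12 := by
    rw [← sumB hM2]
    refine Finset.sum_congr rfl fun j _ => ?_
    by_cases hj : j = 0 <;> simp [hj] <;> norm_num
  -- rows i+1
  have rowbound : ∀ i ∈ Finset.range m,
      (∑ j ∈ Finset.range M2,
        (if (i+1:ℕ) = 0 ∧ j = 0 then (0:ℝ)
          else 1 / (4 - 2 * Real.cos (2 * Real.pi * ((i+1 : ℕ):ℝ) / ((m+1 : ℕ):ℝ))
            - 2 * Real.cos (2 * Real.pi * j / M2))))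
      ≤ (M2:ℝ) / (4 * Real.sin (Real.pi * ((i+1 : ℕ):ℝ) / ((m+1 : ℕ):ℝ)))
        + 1 / (2 - 2 * Real.cos (2 * Real.pi * ((i+1 : ℕ):ℝ) / ((m+1 : ℕ):ℝ))) := by
    intro i hi
    have him := Finset.mem_range.mp hi
    have hx0 : 0 < Real.pi * ((i+1 : ℕ):ℝ) / ((m+1 : ℕ):ℝ) := by positivity
    have hxπ : Real.pi * ((i+1 : ℕ):ℝ) / ((m+1 : ℕ):ℝ) < Real.pi := by
      rw [div_lt_iff₀ hApos]
      have : ((i+1 : ℕ):ℝ) < ((m+1 : ℕ):ℝ) := by exact_mod_cast (by omega : i + 1 < m + 1)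
      nlinarith
    have hsinx : 0 < Real.sin (Real.pi * ((i+1 : ℕ):ℝ) / ((m+1 : ℕ):ℝ)) :=
      Real.sin_pos_of_pos_of_lt_pi hx0 hxπ
    have hcosarg : 2 * Real.pi * ((i+1 : ℕ):ℝ) / ((m+1 : ℕ):ℝ)
        = 2 * (Real.pi * ((i+1 : ℕ):ℝ) / ((m+1 : ℕ):ℝ)) := by ring
    have ha : 2 - 2 * Real.cos (2 * Real.pi * ((i+1 : ℕ):ℝ) / ((m+1 : ℕ):ℝ))
        = (2 * Real.sin (Real.pi * ((i+1 : ℕ):ℝ) / ((m+1 : ℕ):ℝ)))^2 := by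
      rw [hcosarg, Real.cos_two_mul]
      linear_combination (-4) * Real.sin_sq_add_cos_sq (Real.pi * ((i+1 : ℕ):ℝ) / ((m+1 : ℕ):ℝ))
    have ha' : 0 < 2 - 2 * Real.cos (2 * Real.pi * ((i+1 : ℕ):ℝ) / ((m+1 : ℕ):ℝ)) := by
      rw [ha]; exact pow_pos (by linarith) 2
    have hsqrt : Real.sqrt (2 - 2 * Real.cos (2 * Real.pi * ((i+1 : ℕ):ℝ) / ((m+1 : ℕ):ℝ)))
        = 2 * Real.sin (Real.pi * ((i+1 : ℕ):ℝ) / ((m+1 : ℕ):ℝ)) := by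
      rw [ha, Real.sqrt_sq (by linarith)]
    calc (∑ j ∈ Finset.range M2,
        (if (i+1:ℕ) = 0 ∧ j = 0 then (0:ℝ)
          else 1 / (4 - 2 * Real.cos (2 * Real.pi * ((i+1 : ℕ):ℝ) / ((m+1 : ℕ):ℝ))
            - 2 * Real.cos (2 * Real.pi * j / M2))))
        = ∑ j ∈ Finset.range M2,
            1 / ((2 - 2 * Real.cos (2 * Real.pi * ((i+1 : ℕ):ℝ) / ((m+1 : ℕ):ℝ)))
              + 2 - 2 * Real.cos (2 * Real.pi * j / M2)) := by
          refine Finset.sum_congr rfl fun j _ => ?_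
          rw [if_neg (by simp)]
          congr 1
          ring
      _ ≤ (M2:ℝ) / (2 * Real.sqrt (2 - 2 * Real.cos (2 * Real.pi * ((i+1 : ℕ):ℝ) / ((m+1 : ℕ):ℝ))))
            + 1 / (2 - 2 * Real.cos (2 * Real.pi * ((i+1 : ℕ):ℝ) / ((m+1 : ℕ):ℝ))) :=
          rowA hM2 ha'
      _ = (M2:ℝ) / (4 * Real.sin (Real.pi * ((i+1 : ℕ):ℝ) / ((m+1 : ℕ):ℝ)))
            + 1 / (2 - 2 * Real.cos (2 * Real.pi * ((i+1 : ℕ):ℝ) / ((m+1 : ℕ):ℝ))) := by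
          rw [hsqrt]; ring_nf

  -- harmonic sum bound
  have hH : ∑ i ∈ Finset.range m, (1:ℝ)/((i:ℝ)+1) ≤ 1 + Real.log M2 := by
    have h := harm_le m (by omega)
    have hlog : Real.log m ≤ Real.log M2 := by
      have hmM : (m:ℝ) ≤ (M2:ℝ) := by exact_mod_cast (by omega : m ≤ M2)
      exact Real.log_le_log (by positivity) hmM
    linarith
  -- reflected harmonic sum
  have hreflect : ∑ i ∈ Finset.range m, (1:ℝ)/(((m+1:ℕ):ℝ) - ((i+1:ℕ):ℝ))
      = ∑ i ∈ Finset.range m, (1:ℝ)/((i:ℝ)+1) := by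
    rw [← Finset.sum_range_reflect (fun i => (1:ℝ)/((i:ℝ)+1)) m]
    refine Finset.sum_congr rfl fun i hi => ?_
    have him := Finset.mem_range.mp hi
    congr 1
    have h1 : m - 1 - i = m - (i+1) := by omega
    rw [h1, Nat.cast_sub (by omega : i + 1 ≤ m)]
    push_cast
    ring
  -- bound on the sine sum
  have hsinsum : ∑ i ∈ Finset.range m,
      (M2:ℝ) / (4 * Real.sin (Real.pi * ((i+1 : ℕ):ℝ) / ((m+1 : ℕ):ℝ)))
      ≤ (M2:ℝ)/4 * (2 * ((m+1:ℕ):ℝ)/Real.pi * (1 + Real.log M2) + m) := by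
    have step : ∀ i ∈ Finset.range m,
        (M2:ℝ) / (4 * Real.sin (Real.pi * ((i+1 : ℕ):ℝ) / ((m+1 : ℕ):ℝ)))
        ≤ (M2:ℝ)/4 * (((m+1:ℕ):ℝ)/(Real.pi*((i+1:ℕ):ℝ))
            + ((m+1:ℕ):ℝ)/(Real.pi*(((m+1:ℕ):ℝ) - ((i+1:ℕ):ℝ))) + 1) := by
      intro i hi
      have him := Finset.mem_range.mp hi
      have hb := inv_sin_bound (n := m+1) (i := i+1) (by omega) (by omega) (by omega)
      have heq : (M2:ℝ)/(4 * Real.sin (Real.pi*((i+1:ℕ):ℝ)/((m+1:ℕ):ℝ)))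
          = (M2:ℝ)/4 * (1/Real.sin (Real.pi*((i+1:ℕ):ℝ)/((m+1:ℕ):ℝ))) := by ring
      rw [heq]
      exact mul_le_mul_of_nonneg_left hb (by positivity)
    refine le_trans (Finset.sum_le_sum step) ?_
    rw [← Finset.mul_sum]
    apply mul_le_mul_of_nonneg_left _ (by positivity : (0:ℝ) ≤ (M2:ℝ)/4)
    rw [Finset.sum_add_distrib, Finset.sum_add_distrib]
    have e1 : ∑ i ∈ Finset.range m, ((m+1:ℕ):ℝ)/(Real.pi*((i+1:ℕ):ℝ))
        = ((m+1:ℕ):ℝ)/Real.pi * ∑ i ∈ Finset.range m, (1:ℝ)/((i:ℝ)+1) := by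
      rw [Finset.mul_sum]
      refine Finset.sum_congr rfl fun i _ => ?_
      rw [div_mul_div_comm, mul_one]
      push_cast
      ring_nf
    have e2 : ∑ i ∈ Finset.range m, ((m+1:ℕ):ℝ)/(Real.pi*(((m+1:ℕ):ℝ) - ((i+1:ℕ):ℝ)))
        = ((m+1:ℕ):ℝ)/Real.pi * ∑ i ∈ Finset.range m, (1:ℝ)/((i:ℝ)+1) := by
      rw [← hreflect, Finset.mul_sum]
      refine Finset.sum_congr rfl fun i _ => ?_
      rw [div_mul_div_comm, mul_one]
    have e3 : ∑ i ∈ Finset.range m, (1:ℝ) = (m:ℝ) := by simp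
    rw [e1, e2, e3]
    have hH2 : ((m+1:ℕ):ℝ)/Real.pi * ∑ i ∈ Finset.range m, (1:ℝ)/((i:ℝ)+1)
        ≤ ((m+1:ℕ):ℝ)/Real.pi * (1 + Real.log M2) :=
      mul_le_mul_of_nonneg_left hH (by positivity)
    have : 2 * ((m+1:ℕ):ℝ)/Real.pi * (1 + Real.log M2)
        = ((m+1:ℕ):ℝ)/Real.pi * (1 + Real.log M2) + ((m+1:ℕ):ℝ)/Real.pi * (1 + Real.log M2) := by
      ring
    rw [this]
    linarith
  -- exact value of the csc^2 sum over rows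
  have hcsc : ∑ i ∈ Finset.range m,
      1/(2 - 2*Real.cos (2*Real.pi*((i+1:ℕ):ℝ)/((m+1:ℕ):ℝ))) = (((m+1:ℕ):ℝ)^2-1)/12 := by
    have h := sumB (show 2 ≤ m+1 by omega)
    rw [Finset.sum_range_succ'] at h
    simpa using h
  -- total bound
  have key : ∑ i ∈ Finset.range (m+1), ∑ j ∈ Finset.range M2,
      (if i = 0 ∧ j = 0 then (0:ℝ)
        else 1 / (4 - 2 * Real.cos (2 * Real.pi * (i:ℝ) / ((m+1 : ℕ):ℝ))
          - 2 * Real.cos (2 * Real.pi * (j:ℝ) / (M2:ℝ))))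
      ≤ (M2:ℝ)/4 * (2 * ((m+1:ℕ):ℝ)/Real.pi * (1 + Real.log M2) + m)
        + (((m+1:ℕ):ℝ)^2-1)/12 + ((M2:ℝ)^2 - 1)/12 := by
    rw [Finset.sum_range_succ', row0]
    have hrows : ∑ i ∈ Finset.range m, (∑ j ∈ Finset.range M2,
        (if (i+1:ℕ) = 0 ∧ j = 0 then (0:ℝ)
          else 1 / (4 - 2 * Real.cos (2 * Real.pi * ((i+1 : ℕ):ℝ) / ((m+1 : ℕ):ℝ))
            - 2 * Real.cos (2 * Real.pi * j / M2))))
        ≤ (M2:ℝ)/4 * (2 * ((m+1:ℕ):ℝ)/Real.pi * (1 + Real.log M2) + m)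
          + (((m+1:ℕ):ℝ)^2-1)/12 := by
      refine le_trans (Finset.sum_le_sum rowbound) ?_
      rw [Finset.sum_add_distrib, hcsc]
      exact add_le_add_left hsinsum _
    linarith
  -- final arithmetic
  have hAN : ((m+1:ℕ):ℝ) ≤ (M2:ℝ) := by exact_mod_cast h12
  have hA4 : (4:ℝ) ≤ ((m+1:ℕ):ℝ) := by exact_mod_cast h1
  have hmA : (m:ℝ) ≤ ((m+1:ℕ):ℝ) := by push_cast; linarith
  have hfrac : ((m+1:ℕ):ℝ)*(M2:ℝ)/(2*Real.pi) ≤ ((m+1:ℕ):ℝ)*(M2:ℝ)/6 :=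
    frac_aux (by positivity) hπ3
  have hRHS : ((m+1:ℕ):ℝ) * (M2:ℝ) * ((1 / (2 * Real.pi)) * Real.log (M2:ℝ)
        + (1 / 12) * ((M2:ℝ) / ((m+1:ℕ):ℝ)) + 1)
      = ((m+1:ℕ):ℝ)*(M2:ℝ)*Real.log (M2:ℝ)/(2*Real.pi) + (M2:ℝ)^2/12 + ((m+1:ℕ):ℝ)*(M2:ℝ) := by
    field_simp
  have hKexp : (M2:ℝ)/4 * (2 * ((m+1:ℕ):ℝ)/Real.pi * (1 + Real.log (M2:ℝ)) + m)
      = ((m+1:ℕ):ℝ)*(M2:ℝ)/(2*Real.pi) + ((m+1:ℕ):ℝ)*(M2:ℝ)*Real.log (M2:ℝ)/(2*Real.pi)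
        + (M2:ℝ)*(m:ℝ)/4 := by
    field_simp
    ring
  have hm4 : (M2:ℝ)*(m:ℝ) ≤ ((m+1:ℕ):ℝ)*(M2:ℝ) := by
    rw [mul_comm (((m+1:ℕ):ℝ)) ((M2:ℝ))]
    exact mul_le_mul_of_nonneg_left hmA hNpos.le
  have hA2 : ((m+1:ℕ):ℝ)^2 ≤ ((m+1:ℕ):ℝ)*(M2:ℝ) := by
    rw [sq]
    exact mul_le_mul_of_nonneg_left hAN hApos.le
  have hANpos : (0:ℝ) < ((m+1:ℕ):ℝ) * (M2:ℝ) := mul_pos hApos hNpos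
  have hfin : (M2:ℝ)/4 * (2 * ((m+1:ℕ):ℝ)/Real.pi * (1 + Real.log M2) + m)
        + (((m+1:ℕ):ℝ)^2-1)/12 + ((M2:ℝ)^2 - 1)/12
      ≤ ((m+1:ℕ):ℝ) * (M2:ℝ) * ((1 / (2 * Real.pi)) * Real.log (M2:ℝ)
        + (1 / 12) * ((M2:ℝ) / ((m+1:ℕ):ℝ)) + 1) := by
    rw [hKexp, hRHS]
    linarith
  have hchain := le_trans key hfin
  unfold Rave2
  refine le_trans (mul_le_mul_of_nonneg_left hchain (by positivity)) ?_
  rw [← mul_assoc, one_div_mul_cancel hANpos.ne', one_mul]
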